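/- Let m ∈ ℕ and let N be an ℝ^m-valued random vector whose law is absolutely continuous with respect to Lebesgue measure and satisfies the tail bound P(|N|_∞ > r) ≤ C₀ e^{−r²/C₀} (r > 0) for some C₀ > 0. Let ς be a Borel measure on ℝ with ς((−∞, z]) ≤ C₀(1 + z^{C₀}) for all z ≥ 0. Let (Φ_ε)_{ε∈(0,1)} be continuous functions ℝ × ℝ^m → ℝ converging locally uniformly, as ε → 0⁺, to a continuous function Φ such that for every z ∈ ℝ the set {y ∈ ℝ^m : Φ(z,y) = 0} has Lebesgue measure zero. Assume moreover there are constants C, R, p, q > 0 such that |Φ_ε(z,y)| ≥ C|z|^p whenever ε ∈ (0,1), |z| ≥ R and |y|_∞ ≤ |z|^q. Then for every δ′ > 0, lim_{ε→0⁺} ∫_ℝ P( |Φ_ε(z, N)| ≤ ε^{δ′} ) ς(dz) = 0. -/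

import Mathlib

open MeasureTheory Filter
open scoped Topology ENNReal
open Real

lemma aux_summable18 (C₀ q : ℝ) (hC₀ : 0 < C₀) (hq : 0 < q) :
    Summable (fun n : ℕ =>
      (C₀ * Real.exp (-(((n : ℝ) ^ q) ^ 2) / C₀)) * (C₀ * (1 + ((n : ℝ) + 1) ^ C₀))) := by
  set f : ℕ → ℝ := fun n =>
    (C₀ * Real.exp (-(((n : ℝ) ^ q) ^ 2) / C₀)) * (C₀ * (1 + ((n : ℝ) + 1) ^ C₀)) with hf
  have hfnn : ∀ n, 0 ≤ f n := by
    intro n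
    have h1 : (0:ℝ) ≤ ((n:ℝ) + 1) ^ C₀ := Real.rpow_nonneg (by positivity) _
    positivity
  -- the key: (n:ℝ)^2 * f n → 0
  have key : Tendsto (fun n : ℕ => (n : ℝ) ^ 2 * f n) atTop (𝓝 0) := by
    set s : ℝ := (C₀ + 2) / (2 * q) with hs
    set K : ℝ := C₀ ^ 2 * (1 + (2:ℝ) ^ C₀) with hK
    have hmaj : Tendsto (fun n : ℕ =>
        K * (((n : ℝ) ^ (2 * q)) ^ s * Real.exp (-(1 / C₀) * (n : ℝ) ^ (2 * q))))
        atTop (𝓝 0) := by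
      have h1 : Tendsto (fun x : ℝ => x ^ s * Real.exp (-(1 / C₀) * x)) atTop (𝓝 0) :=
        tendsto_rpow_mul_exp_neg_mul_atTop_nhds_zero s (1 / C₀) (by positivity)
      have h2 : Tendsto (fun n : ℕ => (n : ℝ) ^ (2 * q)) atTop atTop :=
        (tendsto_rpow_atTop (by positivity)).comp tendsto_natCast_atTop_atTop
      simpa using (h1.comp h2).const_mul K
    refine squeeze_zero' ?_ ?_ hmaj
    · filter_upwards with n
      have := hfnn n
      positivity
    · filter_upwards [eventually_ge_atTop 1] with n hn
      have hx1 : (1:ℝ) ≤ (n : ℝ) := by exact_mod_cast hn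
      have hx0 : (0:ℝ) < (n : ℝ) := lt_of_lt_of_le one_pos hx1
      -- rewrite exponents
      have e1 : (((n:ℝ) ^ q) ^ 2 : ℝ) = (n : ℝ) ^ (2 * q) := by
        rw [← Real.rpow_natCast ((n:ℝ) ^ q) 2, ← Real.rpow_mul hx0.le]
        norm_num [mul_comm]
      have e2 : (((n:ℝ) ^ (2 * q)) ^ s : ℝ) = (n : ℝ) ^ (C₀ + 2) := by
        rw [← Real.rpow_mul hx0.le, hs]
        congr 1
        field_simp
      have e3 : (n : ℝ) ^ (C₀ + 2) = (n : ℝ) ^ C₀ * (n : ℝ) ^ 2 := by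
        rw [Real.rpow_add hx0, Real.rpow_two]
      have e4 : -((((n:ℝ) ^ q) ^ 2 : ℝ)) / C₀ = -(1 / C₀) * (n : ℝ) ^ (2 * q) := by
        rw [e1]; ring
      have hpoly : (n : ℝ) ^ 2 * (1 + ((n : ℝ) + 1) ^ C₀) ≤
          (1 + (2:ℝ) ^ C₀) * ((n : ℝ) ^ C₀ * (n : ℝ) ^ 2) := by
        have h1 : (1:ℝ) ≤ (n : ℝ) ^ C₀ := Real.one_le_rpow hx1 hC₀.le
        have h2 : ((n : ℝ) + 1) ^ C₀ ≤ (2 * (n:ℝ)) ^ C₀ :=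
          Real.rpow_le_rpow (by positivity) (by linarith) hC₀.le
        have h3 : ((2:ℝ) * (n:ℝ)) ^ C₀ = (2:ℝ) ^ C₀ * (n:ℝ) ^ C₀ :=
          Real.mul_rpow (by norm_num) hx0.le
        nlinarith [sq_nonneg ((n:ℝ)), Real.rpow_nonneg (le_of_lt hx0) C₀,
          Real.rpow_nonneg (by norm_num : (0:ℝ) ≤ 2) C₀]
      have hexp : (0:ℝ) < Real.exp (-(1 / C₀) * (n : ℝ) ^ (2 * q)) := Real.exp_pos _
      calc (n : ℝ) ^ 2 * f n
          = ((n : ℝ) ^ 2 * (1 + ((n : ℝ) + 1) ^ C₀)) * (C₀ ^ 2 *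
              Real.exp (-(1 / C₀) * (n : ℝ) ^ (2 * q))) := by
            simp only [hf]; rw [e4]; ring
        _ ≤ ((1 + (2:ℝ) ^ C₀) * ((n : ℝ) ^ C₀ * (n : ℝ) ^ 2)) * (C₀ ^ 2 *
              Real.exp (-(1 / C₀) * (n : ℝ) ^ (2 * q))) := by
            apply mul_le_mul_of_nonneg_right hpoly (by positivity)
        _ = K * (((n : ℝ) ^ (2 * q)) ^ s * Real.exp (-(1 / C₀) * (n : ℝ) ^ (2 * q))) := by
            rw [e2, e3, hK]; ring
  -- conclude summability
  have hev : ∀ᶠ n : ℕ in atTop, ‖f n‖ ≤ 1 * ‖1 / (n : ℝ) ^ 2‖ := by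
    filter_upwards [key.eventually_le_const (by norm_num : (0:ℝ) < 1),
      eventually_ge_atTop 1] with n h1 hn
    have hx0 : (0:ℝ) < (n : ℝ) := by exact_mod_cast hn
    rw [Real.norm_eq_abs, Real.norm_eq_abs, abs_of_nonneg (hfnn n),
      abs_of_nonneg (by positivity : (0:ℝ) ≤ 1 / (n:ℝ)^2), one_mul]
    rw [le_div_iff₀ (by positivity)]
    linarith [h1]
  exact summable_of_isBigO_nat (Real.summable_one_div_nat_pow.mpr one_lt_two)
    (Asymptotics.IsBigO.of_bound 1 hev)

theorem stmt18 {Ω : Type*} [MeasurableSpace Ω] (P : Measure Ω) [IsProbabilityMeasure P]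
    (m : ℕ) (C₀ : ℝ) (hC₀ : 0 < C₀)
    (N : Ω → (Fin m → ℝ)) (hN : Measurable N)
    (hNac : P.map N ≪ (volume : Measure (Fin m → ℝ)))
    (hNtail : ∀ r : ℝ, 0 < r →
      P {ω | r < ‖N ω‖} ≤ ENNReal.ofReal (C₀ * Real.exp (-(r ^ 2) / C₀)))
    (ς : Measure ℝ)
    (hς : ∀ z : ℝ, 0 ≤ z → ς (Set.Iic z) ≤ ENNReal.ofReal (C₀ * (1 + z ^ C₀)))
    (Φ : ℝ → ℝ → (Fin m → ℝ) → ℝ) (Φ₀ : ℝ → (Fin m → ℝ) → ℝ)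
    (hΦc : ∀ ε ∈ Set.Ioo (0:ℝ) 1, Continuous (fun q : ℝ × (Fin m → ℝ) => Φ ε q.1 q.2))
    (hΦ₀c : Continuous (fun q : ℝ × (Fin m → ℝ) => Φ₀ q.1 q.2))
    (hLU : TendstoLocallyUniformly (fun ε (q : ℝ × (Fin m → ℝ)) => Φ ε q.1 q.2)
      (fun q => Φ₀ q.1 q.2) (nhdsWithin (0:ℝ) (Set.Ioi 0)))
    (hzero : ∀ z : ℝ, volume {y : Fin m → ℝ | Φ₀ z y = 0} = 0)
    (Cb R p q : ℝ) (hCb : 0 < Cb) (hR : 0 < R) (hp : 0 < p) (hq : 0 < q)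
    (hlow : ∀ ε ∈ Set.Ioo (0:ℝ) 1, ∀ z : ℝ, ∀ y : Fin m → ℝ,
      R ≤ |z| → ‖y‖ ≤ |z| ^ q → Cb * |z| ^ p ≤ |Φ ε z y|) :
    ∀ δ : ℝ, 0 < δ →
      Tendsto (fun ε => ∫⁻ z, P {ω | |Φ ε z (N ω)| ≤ ε ^ δ} ∂ς)
        (nhdsWithin (0:ℝ) (Set.Ioi 0)) (nhds 0) := by
  intro δ hδ
  haveI : IsProbabilityMeasure (P.map N) := Measure.isProbabilityMeasure_map hN.aemeasurable
  set c : ℕ → ℝ≥0∞ :=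
    fun n => ENNReal.ofReal (C₀ * Real.exp (-(((n : ℝ) ^ q) ^ 2) / C₀)) with hc
  set A : ℕ → Set ℝ := fun n => {z : ℝ | (n : ℝ) ≤ |z| ∧ |z| < (n : ℝ) + 1} with hA
  have hAmeas : ∀ n, MeasurableSet (A n) := by
    intro n
    rw [hA]
    simp only [Set.setOf_and]
    exact ((isClosed_le continuous_const continuous_abs).measurableSet).inter
      ((isOpen_lt continuous_abs continuous_const).measurableSet)
  set bound : ℝ → ℝ≥0∞ := fun z =>
    (Set.Icc (-R) R).indicator (fun _ => (1 : ℝ≥0∞)) z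
      + ∑' n : ℕ, (A n).indicator (fun _ => c n) z with hbound
  have hIoo : Set.Ioo (0:ℝ) 1 ∈ nhdsWithin (0:ℝ) (Set.Ioi 0) :=
    Ioo_mem_nhdsGT_of_mem (by constructor <;> norm_num)
  -- ε ^ δ → 0
  have hεδ0 : Tendsto (fun ε : ℝ => ε ^ δ) (nhdsWithin (0:ℝ) (Set.Ioi 0)) (𝓝 0) := by
    have h := (Real.continuousAt_rpow_const 0 δ (Or.inr hδ.le)).tendsto
    rw [Real.zero_rpow hδ.ne'] at h
    exact h.mono_left nhdsWithin_le_nhds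
  -- measurability
  have hF_meas : ∀ᶠ ε in nhdsWithin (0:ℝ) (Set.Ioi 0),
      Measurable (fun z => P {ω | |Φ ε z (N ω)| ≤ ε ^ δ}) := by
    filter_upwards [hIoo] with ε hε
    have hs : MeasurableSet {x : ℝ × (Fin m → ℝ) | |Φ ε x.1 x.2| ≤ ε ^ δ} :=
      (isClosed_le ((hΦc ε hε).abs) continuous_const).measurableSet
    have heq : (fun z => P {ω | |Φ ε z (N ω)| ≤ ε ^ δ})
        = fun z => (P.map N)
          (Prod.mk z ⁻¹' {x : ℝ × (Fin m → ℝ) | |Φ ε x.1 x.2| ≤ ε ^ δ}) := by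
      funext z
      rw [Measure.map_apply hN (hs.preimage measurable_prodMk_left)]
      rfl
    rw [heq]
    exact measurable_measure_prodMk_left hs
  -- domination
  have hRp : (0:ℝ) < Cb * R ^ p := by positivity
  have h_bound : ∀ᶠ ε in nhdsWithin (0:ℝ) (Set.Ioi 0),
      ∀ᵐ z ∂ς, P {ω | |Φ ε z (N ω)| ≤ ε ^ δ} ≤ bound z := by
    filter_upwards [hIoo, hεδ0.eventually_lt_const hRp] with ε hε hεlt
    refine Filter.Eventually.of_forall (fun z => ?_)
    by_cases hz : |z| ≤ R
    · calc P {ω | |Φ ε z (N ω)| ≤ ε ^ δ} ≤ 1 := prob_le_one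
        _ = (Set.Icc (-R) R).indicator (fun _ => (1:ℝ≥0∞)) z := by
            rw [Set.indicator_of_mem]
            rcases abs_le.mp hz with ⟨h1, h2⟩
            exact ⟨h1, h2⟩
        _ ≤ bound z := le_self_add
    · push_neg at hz
      have hz0 : (0:ℝ) < |z| := lt_trans hR hz
      have hsub : {ω | |Φ ε z (N ω)| ≤ ε ^ δ} ⊆ {ω | |z| ^ q < ‖N ω‖} := by
        intro ω hω
        simp only [Set.mem_setOf_eq] at hω ⊢
        by_contra hcon
        push_neg at hcon
        have h1 := hlow ε hε z (N ω) hz.le hcon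
        have h2 : Cb * R ^ p ≤ Cb * |z| ^ p :=
          mul_le_mul_of_nonneg_left (Real.rpow_le_rpow hR.le hz.le hp.le) hCb.le
        linarith
      have hzA : z ∈ A ⌊|z|⌋₊ := ⟨Nat.floor_le (abs_nonneg z), Nat.lt_floor_add_one _⟩
      calc P {ω | |Φ ε z (N ω)| ≤ ε ^ δ}
          ≤ P {ω | |z| ^ q < ‖N ω‖} := measure_mono hsub
        _ ≤ ENNReal.ofReal (C₀ * Real.exp (-((|z| ^ q) ^ 2) / C₀)) :=
            hNtail _ (Real.rpow_pos_of_pos hz0 q)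
        _ ≤ c ⌊|z|⌋₊ := by
            apply ENNReal.ofReal_le_ofReal
            have hnq : (((⌊|z|⌋₊ : ℝ)) ^ q) ^ 2 ≤ (|z| ^ q) ^ 2 := by
              have h := Real.rpow_le_rpow (Nat.cast_nonneg _)
                (Nat.floor_le (abs_nonneg z)) hq.le
              exact pow_le_pow_left₀ (Real.rpow_nonneg (Nat.cast_nonneg _) q) h 2
            gcongr
        _ = (A ⌊|z|⌋₊).indicator (fun _ => c ⌊|z|⌋₊) z := (Set.indicator_of_mem hzA (fun _ => c ⌊|z|⌋₊)).symm
        _ ≤ ∑' n : ℕ, (A n).indicator (fun _ => c n) z := ENNReal.le_tsum _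
        _ ≤ bound z := le_add_self
  -- integrability of the bound
  have h_fin : ∫⁻ z, bound z ∂ς ≠ ⊤ := by
    have hind : Measurable ((Set.Icc (-R) R).indicator (fun _ => (1:ℝ≥0∞))) :=
      measurable_const.indicator measurableSet_Icc
    have h1 : ∫⁻ z, bound z ∂ς
        = ς (Set.Icc (-R) R) + ∑' n : ℕ, c n * ς (A n) := by
      rw [hbound, lintegral_add_left hind]
      congr 1
      · rw [lintegral_indicator_const measurableSet_Icc, one_mul]
      · rw [lintegral_tsum (fun n => (measurable_const.indicator (hAmeas n)).aemeasurable)]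
        congr 1
        funext n
        rw [lintegral_indicator_const (hAmeas n)]
    rw [h1]
    have h2 : ς (Set.Icc (-R) R) ≤ ENNReal.ofReal (C₀ * (1 + R ^ C₀)) :=
      le_trans (measure_mono (fun z hz => hz.2)) (hς R hR.le)
    have h3 : ∑' n : ℕ, c n * ς (A n)
        ≤ ∑' n : ℕ, ENNReal.ofReal ((C₀ * Real.exp (-(((n : ℝ) ^ q) ^ 2) / C₀))
            * (C₀ * (1 + ((n : ℝ) + 1) ^ C₀))) := by
      apply ENNReal.tsum_le_tsum
      intro n
      rw [ENNReal.ofReal_mul (by positivity)]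
      apply mul_le_mul' le_rfl
      refine le_trans (measure_mono ?_) (hς ((n:ℝ)+1) (by positivity))
      intro z hz
      exact le_trans (le_abs_self z) hz.2.le
    rw [← ENNReal.ofReal_tsum_of_nonneg (fun n => by positivity)
      (aux_summable18 C₀ q hC₀ hq)] at h3
    exact ((add_le_add h2 h3).trans_lt
      (ENNReal.add_lt_top.mpr ⟨ENNReal.ofReal_lt_top, ENNReal.ofReal_lt_top⟩)).ne
  -- pointwise convergence
  have h_lim : ∀ z : ℝ, Tendsto (fun ε => P {ω | |Φ ε z (N ω)| ≤ ε ^ δ})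
      (nhdsWithin (0:ℝ) (Set.Ioi 0)) (𝓝 0) := by
    intro z
    rw [ENNReal.tendsto_nhds_zero]
    intro η hη
    have hη2 : (0:ℝ≥0∞) < η / 2 := ENNReal.div_pos hη.ne' (by norm_num)
    -- choose M
    have htail : Tendsto (fun M : ℝ => ENNReal.ofReal (C₀ * Real.exp (-(M ^ 2) / C₀)))
        atTop (𝓝 0) := by
      have h1 : Tendsto (fun M : ℝ => M ^ 2 / C₀) atTop atTop :=
        (tendsto_pow_atTop two_ne_zero).atTop_div_const hC₀
      have h2 : Tendsto (fun M : ℝ => Real.exp (-(M ^ 2) / C₀)) atTop (𝓝 0) := by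
        have h := Real.tendsto_exp_neg_atTop_nhds_zero.comp h1
        refine h.congr fun M => ?_
        simp [Function.comp, neg_div]
      have h3 := h2.const_mul C₀
      rw [mul_zero] at h3
      have h4 := ENNReal.tendsto_ofReal h3
      simpa using h4
    obtain ⟨M₀, hM₀⟩ := eventually_atTop.mp (htail.eventually_lt_const hη2)
    set M := max M₀ 1 with hM
    have hM1 : (1:ℝ) ≤ M := le_max_right _ _
    have hM0 : (0:ℝ) < M := lt_of_lt_of_le one_pos hM1
    have hMtail : P {ω | M < ‖N ω‖} ≤ η / 2 :=
      le_trans (hNtail M hM0) (hM₀ M (le_max_left _ _)).le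
    -- choose k via continuity from above
    set S : ℕ → Set (Fin m → ℝ) :=
      fun k => {y | ‖y‖ ≤ M ∧ |Φ₀ z y| ≤ 2 / ((k:ℝ) + 1)} with hS
    have hΦ₀z : Continuous (fun y : Fin m → ℝ => Φ₀ z y) :=
      hΦ₀c.comp (Continuous.prodMk_right z)
    have hSclosed : ∀ k, IsClosed (S k) := by
      intro k
      rw [hS]
      simp only [Set.setOf_and]
      exact (isClosed_le continuous_norm continuous_const).inter
        (isClosed_le hΦ₀z.abs continuous_const)
    have hSanti : Antitone S := by
      intro k l hkl y hy
      refine ⟨hy.1, le_trans hy.2 ?_⟩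
      have hcast : ((k:ℝ)) ≤ (l:ℝ) := Nat.cast_le.mpr hkl
      gcongr
    have hInter : (⋂ k, S k) ⊆ {y | Φ₀ z y = 0} := by
      intro y hy
      simp only [Set.mem_iInter] at hy
      have ht : Tendsto (fun k : ℕ => 2 / ((k:ℝ) + 1)) atTop (𝓝 0) := by
        have h := (tendsto_one_div_add_atTop_nhds_zero_nat (𝕜 := ℝ)).const_mul 2
        rw [mul_zero] at h
        refine h.congr fun n => ?_
        rw [mul_one_div]
      have h0 : |Φ₀ z y| ≤ 0 := ge_of_tendsto' ht (fun k => (hy k).2)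
      exact abs_nonpos_iff.mp h0
    have hμinter : P.map N (⋂ k, S k) = 0 :=
      le_antisymm (le_trans (measure_mono hInter) (le_of_eq (hNac (hzero z)))) zero_le
    have hcont := tendsto_measure_iInter_atTop
      (μ := P.map N) (fun k => ((hSclosed k).measurableSet).nullMeasurableSet)
      hSanti ⟨0, measure_ne_top _ _⟩
    rw [hμinter] at hcont
    obtain ⟨k, hk⟩ := (hcont.eventually_lt_const hη2).exists
    -- uniform convergence on the compact set
    have hKcomp : IsCompact (({z} : Set ℝ) ×ˢ Metric.closedBall (0 : Fin m → ℝ) M) :=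
      isCompact_singleton.prod (isCompact_closedBall _ _)
    have hU := (tendstoLocallyUniformly_iff_forall_isCompact.mp hLU) _ hKcomp
    have hθ : (0:ℝ) < 1 / ((k:ℝ) + 1) := by positivity
    have hUev := (Metric.tendstoUniformlyOn_iff.mp hU) (1 / ((k:ℝ)+1)) hθ
    filter_upwards [hUev, hεδ0.eventually_lt_const hθ] with ε hεU hεδ
    have hsub : {ω | |Φ ε z (N ω)| ≤ ε ^ δ} ⊆ {ω | M < ‖N ω‖} ∪ N ⁻¹' (S k) := by
      intro ω hω
      simp only [Set.mem_setOf_eq] at hω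
      by_cases hMω : ‖N ω‖ ≤ M
      · right
        refine ⟨hMω, ?_⟩
        have hmem : (z, N ω) ∈ ({z} : Set ℝ) ×ˢ Metric.closedBall (0 : Fin m → ℝ) M :=
          ⟨rfl, Metric.mem_closedBall.mpr (by rwa [dist_zero_right])⟩
        have hd := hεU (z, N ω) hmem
        rw [Real.dist_eq] at hd
        have habs : |Φ₀ z (N ω)| ≤ |Φ₀ z (N ω) - Φ ε z (N ω)| + |Φ ε z (N ω)| := by
          simpa using abs_add_le (Φ₀ z (N ω) - Φ ε z (N ω)) (Φ ε z (N ω))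
        have h21 : 2 / ((k:ℝ)+1) = 1 / ((k:ℝ)+1) + 1 / ((k:ℝ)+1) := by ring
        linarith
      · left
        exact not_le.mp hMω
    calc P {ω | |Φ ε z (N ω)| ≤ ε ^ δ}
        ≤ P ({ω | M < ‖N ω‖} ∪ N ⁻¹' (S k)) := measure_mono hsub
      _ ≤ P {ω | M < ‖N ω‖} + P (N ⁻¹' (S k)) := measure_union_le _ _
      _ ≤ η / 2 + η / 2 := by
          refine add_le_add hMtail ?_
          rw [← Measure.map_apply hN (hSclosed k).measurableSet]
          exact hk.le
      _ = η := ENNReal.add_halves η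
  -- conclude by dominated convergence
  have hmain := tendsto_lintegral_filter_of_dominated_convergence (μ := ς)
    (f := fun _ : ℝ => (0 : ℝ≥0∞)) bound hF_meas h_bound h_fin (ae_of_all ς h_lim)
  simpa using hmain
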